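/- Let D be a linearly connected digraph with exactly two strong components D_1 and D_2, where D_2 is nontrivial, and suppose the sequence {C(D^m)}_{m≥1} converges to a graph G. Define the bipartite graph B_D with parts ZMod κ_1 and ZMod κ_2 as follows: if D_1 is nontrivial, B_D := B_{1,2}; if D_1 is trivial (so κ_1 = 1 and ZMod κ_1 = {0}), then 0 and j ∈ ZMod κ_2 are adjacent in B_D if and only if j = l − 1 in ZMod κ_2 for some l with (0, l) ∈ I(D_{1,2}). Then G is the following graph: (1) two distinct vertices x ∈ U_a^{(1)} and x' ∈ U_{a'}^{(1)} are adjacent in G if and only if a = a' or there exists z ∈ ZMod κ_2 such that both (a, z) and (a', z) are edges of B_D; (2) a vertex x ∈ U_a^{(1)} and a vertex y ∈ U_b^{(2)} are adjacent in G if and only if (a, b) is an edge of B_D; (3) two distinct vertices y ∈ U_b^{(2)} and y' ∈ U_{b'}^{(2)} are adjacent in G if and only if b = b'. -/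

import Mathlib

/-- A digraph: a finite vertex type with an irreflexive arc relation (no loops). -/
structure Digraph' (V : Type*) where
  Adj : V → V → Prop
  irrefl : ∀ v, ¬ Adj v v

namespace Digraph'

variable {V : Type*}

/-- There is a directed walk of length `m` from `x` to `y` in `D`;
i.e. `y` is an `m`-step prey of `x`. -/
def HasWalk (D : Digraph' V) (m : ℕ) (x y : V) : Prop :=
  ∃ f : ℕ → V, f 0 = x ∧ f m = y ∧ ∀ t, t < m → D.Adj (f t) (f (t + 1))

/-- There is a directed walk of length `m` from `x` to `y` staying inside `S`. -/
def HasWalkIn (D : Digraph' V) (S : Set V) (m : ℕ) (x y : V) : Prop :=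
  ∃ f : ℕ → V, f 0 = x ∧ f m = y ∧ (∀ t, t ≤ m → f t ∈ S) ∧
    ∀ t, t < m → D.Adj (f t) (f (t + 1))

/-- The `m`-step competition graph `C(D^m)` of `D`. -/
def compGraph (D : Digraph' V) (m : ℕ) : SimpleGraph V where
  Adj u v := u ≠ v ∧ ∃ z, D.HasWalk m u z ∧ D.HasWalk m v z
  symm := by
    constructor
    rintro u v ⟨hne, z, h1, h2⟩
    exact ⟨hne.symm, z, h2, h1⟩
  loopless := ⟨fun v h => h.1 rfl⟩

/-- The sequence `{C(D^m)}_{m ≥ 1}` converges. -/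
def CompConverges (D : Digraph' V) : Prop :=
  ∃ N : ℕ, 1 ≤ N ∧ ∀ m, N ≤ m → D.compGraph m = D.compGraph N

/-- The sequence `{C(D^m)}_{m ≥ 1}` converges to the graph `G`. -/
def CompConvergesTo (D : Digraph' V) (G : SimpleGraph V) : Prop :=
  ∃ N : ℕ, 1 ≤ N ∧ ∀ m, N ≤ m → D.compGraph m = G

/-- `D` is linearly connected with strong components `Vset 1, …, Vset η`. -/
structure IsLinConn (D : Digraph' V) (η : ℕ) (Vset : ℕ → Set V) : Prop where
  nonempty : ∀ i, 1 ≤ i → i ≤ η → (Vset i).Nonempty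
  cover : ∀ v : V, ∃ i, 1 ≤ i ∧ i ≤ η ∧ v ∈ Vset i
  disjoint' : ∀ i j, 1 ≤ i → i ≤ η → 1 ≤ j → j ≤ η →
      ∀ v : V, v ∈ Vset i → v ∈ Vset j → i = j
  strong : ∀ i, 1 ≤ i → i ≤ η → ∀ x ∈ Vset i, ∀ y ∈ Vset i,
      ∃ m, D.HasWalkIn (Vset i) m x y
  arcs : ∀ x y : V, D.Adj x y → ∃ i, 1 ≤ i ∧
      ((i ≤ η ∧ x ∈ Vset i ∧ y ∈ Vset i) ∨
       (i + 1 ≤ η ∧ x ∈ Vset i ∧ y ∈ Vset (i + 1)))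
  linked : ∀ i, 1 ≤ i → i + 1 ≤ η → ∃ x ∈ Vset i, ∃ y ∈ Vset (i + 1), D.Adj x y

/-- A component with vertex set `S` is trivial if `S` is a singleton. -/
def IsTrivialComp (S : Set V) : Prop := ∃ v : V, S = {v}

/-- `κ` is the index of imprimitivity of the (strong) component with vertex set `S`:
the gcd of the lengths of all closed directed walks inside `S`. -/
def IsImprimIndex (D : Digraph' V) (S : Set V) (κ : ℕ) : Prop :=
  (∀ (x : V) (m : ℕ), x ∈ S → 0 < m → D.HasWalkIn S m x x → κ ∣ m) ∧
  ∀ d : ℕ, (∀ (x : V) (m : ℕ), x ∈ S → 0 < m → D.HasWalkIn S m x x → d ∣ m) → d ∣ κ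

/-- `u` is an imprimitivity labelling on `S`: along any arc inside `S` the label
increases by one.  Its fibers are the sets of imprimitivity. -/
def IsImprimLabelling (D : Digraph' V) (S : Set V) {κ : ℕ} (u : V → ZMod κ) : Prop :=
  ∀ x ∈ S, ∀ y ∈ S, D.Adj x y → u y = u x + 1

/-- `(k, l) ∈ I(D_{p,p+1})`: some arc goes from a vertex of `U_k^{(p)}` to a vertex of
`U_l^{(p+1)}`. -/
def InI (D : Digraph' V) (Vset : ℕ → Set V) {κ : ℕ → ℕ}
    (u : ∀ i : ℕ, V → ZMod (κ i)) (p : ℕ) (k : ZMod (κ p)) (l : ZMod (κ (p + 1))) : Prop :=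
  ∃ x ∈ Vset p, ∃ y ∈ Vset (p + 1), D.Adj x y ∧ u p x = k ∧ u (p + 1) y = l

/-- `(i, j)` is an edge of the bipartite graph `B_{p,p+1}`. -/
def BAdj (D : Digraph' V) (Vset : ℕ → Set V) {κ : ℕ → ℕ}
    (u : ∀ i : ℕ, V → ZMod (κ i)) (p : ℕ) (i : ZMod (κ p)) (j : ZMod (κ (p + 1))) : Prop :=
  ∃ (k : ZMod (κ p)) (l : ZMod (κ (p + 1))) (a : ℤ),
    InI D Vset u p k l ∧ i = k + 1 + (a : ZMod (κ p)) ∧ j = l + (a : ZMod (κ (p + 1)))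

/-- The competition skeleton graph (CS-graph) `PT_D^{(η)}`: vertices are pairs `⟨r, i⟩`
with `i ∈ ZMod (κ r)` (only `1 ≤ r ≤ η` carries edges); `⟨p, i⟩` and `⟨p+1, j⟩` are
adjacent exactly when `i` and `j` are adjacent in `B_{p,p+1}`. -/
def csGraph (D : Digraph' V) (Vset : ℕ → Set V) {κ : ℕ → ℕ}
    (u : ∀ i : ℕ, V → ZMod (κ i)) (η : ℕ) : SimpleGraph ((r : ℕ) × ZMod (κ r)) where
  Adj a b := ∃ p, 1 ≤ p ∧ p + 1 ≤ η ∧ ∃ (i : ZMod (κ p)) (j : ZMod (κ (p + 1))),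
    BAdj D Vset u p i j ∧
    ((a = ⟨p, i⟩ ∧ b = ⟨p + 1, j⟩) ∨ (a = ⟨p + 1, j⟩ ∧ b = ⟨p, i⟩))
  symm := by
    constructor
    rintro a b ⟨p, h1, h2, i, j, hB, hab⟩
    exact ⟨p, h1, h2, i, j, hB,
      hab.elim (fun h => Or.inr ⟨h.2, h.1⟩) (fun h => Or.inl ⟨h.2, h.1⟩)⟩
  loopless := by
    constructor
    rintro a ⟨p, _, _, i, j, _, hab⟩
    rcases hab with ⟨ha, hb⟩ | ⟨ha, hb⟩
    · have h : p = p + 1 := congrArg Sigma.fst (ha.symm.trans hb)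
      omega
    · have h : p + 1 = p := congrArg Sigma.fst (ha.symm.trans hb)
      omega

end Digraph'

namespace Digraph'

section Helpers

variable {V : Type*} {D : Digraph' V} {S : Set V}

lemma HasWalkIn.hasWalk {m : ℕ} {x y : V} (h : D.HasWalkIn S m x y) : D.HasWalk m x y := by
  obtain ⟨f, h0, hm, _, hadj⟩ := h; exact ⟨f, h0, hm, hadj⟩

lemma hasWalkIn_zero {x : V} (hx : x ∈ S) : D.HasWalkIn S 0 x x :=
  ⟨fun _ => x, rfl, rfl, fun _ _ => hx, fun t ht => absurd ht (Nat.not_lt_zero t)⟩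

lemma HasWalkIn.start_mem {m : ℕ} {x y : V} (h : D.HasWalkIn S m x y) : x ∈ S := by
  obtain ⟨f, h0, hm, hS, _⟩ := h
  have := hS 0 (Nat.zero_le m); rwa [h0] at this

lemma HasWalkIn.end_mem {m : ℕ} {x y : V} (h : D.HasWalkIn S m x y) : y ∈ S := by
  obtain ⟨f, h0, hm, hS, _⟩ := h
  have := hS m le_rfl; rwa [hm] at this

lemma hasWalkIn_zero_iff {x y : V} : D.HasWalkIn S 0 x y ↔ x = y ∧ x ∈ S := by
  constructor
  · rintro ⟨f, h0, hm, hS, _⟩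
    refine ⟨h0.symm.trans hm, ?_⟩
    have := hS 0 le_rfl; rwa [h0] at this
  · rintro ⟨rfl, hx⟩; exact hasWalkIn_zero hx

lemma HasWalkIn.comp {a b : ℕ} {x y z : V} (h1 : D.HasWalkIn S a x y)
    (h2 : D.HasWalkIn S b y z) : D.HasWalkIn S (a + b) x z := by
  obtain ⟨f, hf0, hfa, hfS, hfadj⟩ := h1
  obtain ⟨g, hg0, hgb, hgS, hgadj⟩ := h2
  have hbd : f a = g 0 := by rw [hfa, hg0]
  refine ⟨fun t => if t < a then f t else g (t - a), ?_, ?_, ?_, ?_⟩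
  · show (if 0 < a then f 0 else g (0 - a)) = x
    rcases Nat.eq_zero_or_pos a with h | h
    · subst h
      simp only [Nat.lt_irrefl, if_false, Nat.zero_sub]
      rw [hg0, ← hfa, hf0]
    · simpa [h] using hf0
  · show (if a + b < a then f (a + b) else g (a + b - a)) = z
    have : ¬ (a + b < a) := by omega
    simp only [this, if_false]
    rw [show a + b - a = b by omega, hgb]
  · intro t ht
    show (if t < a then f t else g (t - a)) ∈ S
    by_cases h : t < a
    · simpa [h] using hfS t (le_of_lt h)
    · simpa [h] using hgS (t - a) (by omega)
  · intro t ht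
    show D.Adj (if t < a then f t else g (t - a)) (if t + 1 < a then f (t + 1) else g (t + 1 - a))
    by_cases h : t + 1 < a
    · simpa [h, show t < a by omega] using hfadj t (by omega)
    · by_cases h' : t < a
      · have hta : t + 1 = a := by omega
        have hval : g (t + 1 - a) = f (t + 1) := by
          rw [hta]; simp only [Nat.sub_self]; rw [hg0, ← hfa]
        simp only [h, h', if_pos, if_neg, not_false_iff]
        rw [hval]
        exact hfadj t (by omega)
      · simp only [h, h', if_neg, not_false_iff]
        rw [show t + 1 - a = (t - a) + 1 by omega]
        exact hgadj (t - a) (by omega)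

lemma HasWalkIn.split {m : ℕ} {x y : V} (h : D.HasWalkIn S m x y) (s : ℕ) (hs : s ≤ m) :
    ∃ w, D.HasWalkIn S s x w ∧ D.HasWalkIn S (m - s) w y := by
  obtain ⟨f, h0, hm, hS, hadj⟩ := h
  refine ⟨f s, ⟨f, h0, rfl, fun t ht => hS t (le_trans ht hs), fun t ht => hadj t (by omega)⟩,
    ⟨fun t => f (s + t), by simp, by show f (s + (m - s)) = y; rw [show s + (m - s) = m by omega, hm],
      fun t ht => hS (s + t) (by omega), fun t ht => ?_⟩⟩
  show D.Adj (f (s + t)) (f (s + (t + 1)))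
  rw [show s + (t + 1) = (s + t) + 1 by omega]
  exact hadj (s + t) (by omega)

lemma hasWalkIn_one {x y : V} (hx : x ∈ S) (hy : y ∈ S) (h : D.Adj x y) :
    D.HasWalkIn S 1 x y := by
  refine ⟨fun t => if t = 0 then x else y, by simp, by simp, ?_, ?_⟩
  · intro t ht
    by_cases h0 : t = 0 <;> simp [h0, hx, hy]
  · intro t ht
    have : t = 0 := by omega
    subst this; simpa using h

lemma HasWalk.split_walk {m : ℕ} {x y : V} (h : D.HasWalk m x y) (s : ℕ) (hs : s ≤ m) :
    ∃ w, D.HasWalk s x w ∧ D.HasWalk (m - s) w y := by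
  obtain ⟨f, h0, hm, hadj⟩ := h
  refine ⟨f s, ⟨f, h0, rfl, fun t ht => hadj t (by omega)⟩,
    ⟨fun t => f (s + t), by simp, by show f (s + (m - s)) = y; rw [show s + (m - s) = m by omega, hm], fun t ht => ?_⟩⟩
  show D.Adj (f (s + t)) (f (s + (t + 1)))
  rw [show s + (t + 1) = (s + t) + 1 by omega]
  exact hadj (s + t) (by omega)

/-- labelling along a walk inside `S` -/
lemma IsImprimLabelling.along {κ : ℕ} {u : V → ZMod κ} (hu : D.IsImprimLabelling S u) :
    ∀ (m : ℕ) (x y : V), D.HasWalkIn S m x y → u y = u x + (m : ZMod κ) := by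
  intro m
  induction m with
  | zero => intro x y h; obtain ⟨rfl, _⟩ := hasWalkIn_zero_iff.mp h; simp
  | succ n ih =>
    intro x y h
    obtain ⟨w, h1, h2⟩ := h.split n (by omega)
    have hrest : D.HasWalkIn S 1 w y := by simpa using h2
    have hwS : w ∈ S := hrest.start_mem
    have hyS : y ∈ S := hrest.end_mem
    obtain ⟨g, hg0, hg1, hgS, hgadj⟩ := hrest
    have hadj : D.Adj w y := by
      have := hgadj 0 (by omega)
      rwa [hg0, hg1] at this
    have := hu w hwS y hyS hadj
    rw [this, ih x w h1]
    push_cast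
    ring

end Helpers

section NumberTheory

/-- From an additively closed set of multiples of `κ` whose gcd is `κ`, extract
`α ∈ A` with `α + κ ∈ A`. -/
lemma exists_pair_add {A : Set ℕ} (hadd : ∀ a ∈ A, ∀ b ∈ A, a + b ∈ A) {κ : ℕ}
    (hdvd : ∀ a ∈ A, κ ∣ a) (hgcd : ∀ d : ℕ, (∀ a ∈ A, d ∣ a) → d ∣ κ)
    (hpos : ∃ a ∈ A, 0 < a) :
    ∃ α, 0 < α ∧ α ∈ A ∧ α + κ ∈ A := by
  classical
  set A₀ : Set ℕ := A ∪ {0} with hA₀def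
  have hadd₀ : ∀ a ∈ A₀, ∀ b ∈ A₀, a + b ∈ A₀ := by
    rintro a (ha | ha) b (hb | hb)
    · exact Or.inl (hadd a ha b hb)
    · simp only [Set.mem_singleton_iff] at hb; subst hb; exact Or.inl ha
    · simp only [Set.mem_singleton_iff] at ha; subst ha; rw [zero_add]; exact Or.inl hb
    · simp only [Set.mem_singleton_iff] at ha hb; subst ha; subst hb; exact Or.inr rfl
  have hdvd₀ : ∀ a ∈ A₀, κ ∣ a := by
    rintro a (ha | ha)
    · exact hdvd a ha
    · simp only [Set.mem_singleton_iff] at ha; subst ha; exact dvd_zero κ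
  let K : AddSubgroup ℤ :=
    { carrier := {z | ∃ a ∈ A₀, ∃ b ∈ A₀, z = (a : ℤ) - (b : ℤ)}
      add_mem' := by
        rintro z w ⟨a, ha, b, hb, rfl⟩ ⟨c, hc, d, hd, rfl⟩
        exact ⟨a + c, hadd₀ a ha c hc, b + d, hadd₀ b hb d hd, by push_cast; ring⟩
      zero_mem' := ⟨0, Or.inr rfl, 0, Or.inr rfl, by simp⟩
      neg_mem' := by
        rintro z ⟨a, ha, b, hb, rfl⟩
        exact ⟨b, hb, a, ha, by ring⟩ }
  obtain ⟨g, hg⟩ := Int.subgroup_cyclic K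
  have hmemK : ∀ z : ℤ, z ∈ K ↔ g ∣ z := by
    intro z
    rw [hg, AddSubgroup.mem_closure_singleton]
    constructor
    · rintro ⟨n, rfl⟩; exact Dvd.intro n (by rw [smul_eq_mul, mul_comm])
    · rintro ⟨n, rfl⟩; exact ⟨n, by rw [smul_eq_mul, mul_comm]⟩
  have hginK : g ∈ K := by rw [hmemK]
  have hκdvdK : ∀ z ∈ K, (κ : ℤ) ∣ z := by
    rintro z ⟨a, ha, b, hb, rfl⟩
    exact dvd_sub (Int.natCast_dvd_natCast.mpr (hdvd₀ a ha))
      (Int.natCast_dvd_natCast.mpr (hdvd₀ b hb))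
  have hκg : (κ : ℤ) ∣ g := hκdvdK g hginK
  have hgA : ∀ a ∈ A, (g.natAbs : ℕ) ∣ a := by
    intro a ha
    have : (a : ℤ) ∈ K := ⟨a, Or.inl ha, 0, Or.inr rfl, by simp⟩
    have hga : g ∣ (a : ℤ) := (hmemK _).mp this
    have : (g.natAbs : ℤ) ∣ (a : ℤ) := (Int.natAbs_dvd).mpr hga
    exact_mod_cast this
  have hgκ : g.natAbs ∣ κ := hgcd _ hgA
  have hκgn : κ ∣ g.natAbs := by
    have := Int.natAbs_dvd_natAbs.mpr hκg
    simpa using this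
  have hκeq : g.natAbs = κ := Nat.dvd_antisymm hgκ hκgn
  have hκinK : (κ : ℤ) ∈ K := by
    rcases Int.natAbs_eq g with h | h
    · rw [hκeq] at h; rw [← h]; exact hginK
    · rw [hκeq] at h
      have : -g = (κ : ℤ) := by omega
      rw [← this]; exact K.neg_mem hginK
  obtain ⟨a, ha, b, hb, hab⟩ := hκinK
  have habn : a = b + κ := by omega
  obtain ⟨a₀, ha₀, ha₀pos⟩ := hpos
  refine ⟨a₀ + b, by omega, ?_, ?_⟩
  · rcases hb with hb | hb
    · exact hadd a₀ ha₀ b hb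
    · simp only [Set.mem_singleton_iff] at hb; subst hb; simpa using ha₀
  · rcases ha with ha | ha
    · have : a₀ + b + κ = a₀ + a := by omega
      rw [this]; exact hadd a₀ ha₀ a ha
    · simp only [Set.mem_singleton_iff] at ha
      have hb0 : b = 0 ∧ κ = 0 := by omega
      rw [hb0.1, hb0.2]; simpa using ha₀

lemma mem_of_large {A : Set ℕ} (hadd : ∀ a ∈ A, ∀ b ∈ A, a + b ∈ A) {κ α : ℕ}
    (hα : κ ∣ α) (hα0 : 0 < α) (h1 : α ∈ A) (h2 : α + κ ∈ A) :
    ∀ n, κ ∣ n → α * α + α ≤ n → n ∈ A := by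
  have hmul : ∀ c, ∀ a ∈ A, (c + 1) * a ∈ A := by
    intro c
    induction c with
    | zero => intro a ha; simpa using ha
    | succ d ih =>
      intro a ha
      have : (d + 1 + 1) * a = (d + 1) * a + a := by ring
      rw [this]
      exact hadd _ (ih a ha) a ha
  intro n hn hle
  obtain ⟨α', hα'⟩ := hα
  obtain ⟨n', hn'⟩ := hn
  have hκpos : 0 < κ := by
    rcases Nat.eq_zero_or_pos κ with h | h
    · exfalso; rw [h] at hα'; simp at hα'; omega
    · exact h
  have hα'pos : 0 < α' := by
    rcases Nat.eq_zero_or_pos α' with h | h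
    · exfalso; rw [h] at hα'; simp at hα'; omega
    · exact h
  set q := n' / α' with hq
  set r := n' % α' with hr
  have hdm : α' * q + r = n' := Nat.div_add_mod n' α'
  have hrlt : r < α' := Nat.mod_lt n' hα'pos
  have hn'big : α' * α + α' ≤ n' := by
    have : κ * (α' * α + α') ≤ κ * n' := by
      calc κ * (α' * α + α') = α * α + α := by rw [hα']; ring
        _ ≤ n := hle
        _ = κ * n' := hn'
    exact Nat.le_of_mul_le_mul_left this hκpos
  have hqbig : α + 1 ≤ q := by
    by_contra hcon
    push_neg at hcon
    have : α' * q + r < α' * α + α' := by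
      have h1' : α' * q ≤ α' * α := Nat.mul_le_mul_left α' (by omega)
      omega
    omega
  have hrq : r + 1 ≤ q := by
    have : α' ≤ α := by
      calc α' ≤ κ * α' := Nat.le_mul_of_pos_left α' hκpos
        _ = α := hα'.symm
    omega
  set e := q - r with he
  have heq : e + r = q := by omega
  have hepos : 0 < e := by omega
  have key : n = e * α + r * (α + κ) := by
    calc n = κ * n' := hn'
      _ = κ * (α' * q + r) := by rw [hdm]
      _ = q * (κ * α') + r * κ := by ring
      _ = q * α + r * κ := by rw [← hα']
      _ = (e + r) * α + r * κ := by rw [heq]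
      _ = e * α + r * (α + κ) := by ring
  rw [key]
  rcases Nat.eq_zero_or_pos r with hr0 | hrpos
  · rw [hr0]
    have h3 : e * α + 0 * (α + κ) = (e - 1 + 1) * α := by
      rw [show e - 1 + 1 = e by omega]; ring
    rw [h3]
    exact hmul (e - 1) α h1
  · exact hadd _ (by
        have : e * α = (e - 1 + 1) * α := by rw [show e - 1 + 1 = e by omega]
        rw [this]; exact hmul (e - 1) α h1) _ (by
        have : r * (α + κ) = (r - 1 + 1) * (α + κ) := by rw [show r - 1 + 1 = r by omega]
        rw [this]; exact hmul (r - 1) (α + κ) h2)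

end NumberTheory

section Strong

variable {V : Type*} {D : Digraph' V} {S : Set V}

lemma exists_ne_mem (hnt : ¬ IsTrivialComp S) {x : V} (hx : x ∈ S) :
    ∃ y ∈ S, y ≠ x := by
  by_contra h
  push_neg at h
  exact hnt ⟨x, Set.eq_singleton_iff_unique_mem.mpr ⟨hx, fun y hy => h y hy⟩⟩

lemma exists_closed_walk (hstrong : ∀ x ∈ S, ∀ y ∈ S, ∃ m, D.HasWalkIn S m x y)
    (hnt : ¬ IsTrivialComp S) {x : V} (hx : x ∈ S) :
    ∃ m, 0 < m ∧ D.HasWalkIn S m x x := by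
  obtain ⟨y, hy, hyx⟩ := exists_ne_mem hnt hx
  obtain ⟨p, hp⟩ := hstrong x hx y hy
  obtain ⟨q, hq⟩ := hstrong y hy x hx
  refine ⟨p + q, ?_, hp.comp hq⟩
  rcases Nat.eq_zero_or_pos p with h | h
  · exfalso
    subst h
    exact hyx (hasWalkIn_zero_iff.mp hp).1.symm
  · omega

lemma forwardWalk (hstrong : ∀ x ∈ S, ∀ y ∈ S, ∃ m, D.HasWalkIn S m x y)
    (hnt : ¬ IsTrivialComp S) {x : V} (hx : x ∈ S) (t : ℕ) :
    ∃ z, z ∈ S ∧ D.HasWalkIn S t x z := by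
  induction t with
  | zero => exact ⟨x, hx, hasWalkIn_zero hx⟩
  | succ n ih =>
    obtain ⟨z, hz, hw⟩ := ih
    obtain ⟨y, hy, hyz⟩ := exists_ne_mem hnt hz
    obtain ⟨p, hp⟩ := hstrong z hz y hy
    have hppos : 0 < p := by
      rcases Nat.eq_zero_or_pos p with h | h
      · exfalso; subst h; exact hyz (hasWalkIn_zero_iff.mp hp).1.symm
      · exact h
    obtain ⟨w, hw1, _⟩ := hp.split 1 hppos
    exact ⟨w, hw1.end_mem, hw.comp hw1⟩

lemma reachBig [Fintype V] {κ : ℕ} {u : V → ZMod κ}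
    (hstrong : ∀ x ∈ S, ∀ y ∈ S, ∃ m, D.HasWalkIn S m x y)
    (hnt : ¬ IsTrivialComp S)
    (hκ : D.IsImprimIndex S κ) (hu : D.IsImprimLabelling S u) :
    ∃ M : ℕ, ∀ m, M ≤ m → ∀ x ∈ S, ∀ z ∈ S, (m : ZMod κ) = u z - u x →
      D.HasWalkIn S m x z := by
  classical
  have hpair : ∀ p : V × V, ∃ Mp : ℕ, ∀ m, Mp ≤ m → p.1 ∈ S → p.2 ∈ S →
      ((m : ZMod κ) = u p.2 - u p.1) → D.HasWalkIn S m p.1 p.2 := by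
    rintro ⟨x, z⟩
    by_cases hx : x ∈ S
    swap
    · exact ⟨0, fun m _ hx' _ _ => absurd hx' hx⟩
    by_cases hz : z ∈ S
    swap
    · exact ⟨0, fun m _ _ hz' _ => absurd hz' hz⟩
    set A : Set ℕ := {n | 0 < n ∧ D.HasWalkIn S n x x} with hAdef
    have hadd : ∀ a ∈ A, ∀ b ∈ A, a + b ∈ A := by
      rintro a ⟨ha1, ha2⟩ b ⟨hb1, hb2⟩
      exact ⟨by omega, ha2.comp hb2⟩
    have hdvdA : ∀ a ∈ A, κ ∣ a := fun a ha => hκ.1 x a hx ha.1 ha.2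
    have hgcdA : ∀ d : ℕ, (∀ a ∈ A, d ∣ a) → d ∣ κ := by
      intro d hd
      apply hκ.2
      intro w n hw hn hwalk
      obtain ⟨p, hp⟩ := hstrong x hx w hw
      obtain ⟨q, hq⟩ := hstrong w hw x hx
      rcases Nat.eq_zero_or_pos (p + q) with hpq | hpq
      · have hp0 : p = 0 := by omega
        subst hp0
        have hxw : x = w := (hasWalkIn_zero_iff.mp hp).1
        subst hxw
        exact hd n ⟨hn, hwalk⟩
      · have h1 : p + q ∈ A := ⟨hpq, hp.comp hq⟩
        have h2 : p + (n + q) ∈ A := ⟨by omega, hp.comp (hwalk.comp hq)⟩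
        have := Nat.dvd_sub (hd _ h2) (hd _ h1)
        simpa [show p + (n + q) - (p + q) = n by omega] using this
    have hposA : ∃ a ∈ A, 0 < a := by
      obtain ⟨c, hc, hcw⟩ := exists_closed_walk hstrong hnt hx
      exact ⟨c, ⟨hc, hcw⟩, hc⟩
    obtain ⟨α, hα0, hαA, hακA⟩ := exists_pair_add hadd hdvdA hgcdA hposA
    obtain ⟨p, hp⟩ := hstrong x hx z hz
    refine ⟨p + α * α + α, fun m hm _ _ hcong => ?_⟩
    have hzp : u z = u x + (p : ZMod κ) := hu.along p x z hp
    have hcast : (m : ZMod κ) = (p : ZMod κ) := by rw [hcong, hzp]; ring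
    have hκdvd : κ ∣ m - p := by
      have hmod := (ZMod.natCast_eq_natCast_iff m p κ).mp hcast
      exact (Nat.modEq_iff_dvd' (by omega)).mp hmod.symm
    have hααα : 0 < α * α + α := by positivity
    have hmem : m - p ∈ A :=
      mem_of_large hadd (hdvdA α hαA) hα0 hαA hακA (m - p) hκdvd (by omega)
    have := hmem.2.comp hp
    simpa [show (m - p) + p = m by omega] using this
  choose F hF using hpair
  refine ⟨Finset.univ.sup F, fun m hm x hx z hz hcong => ?_⟩
  exact hF (x, z) m (le_trans (Finset.le_sup (Finset.mem_univ (x, z))) hm) hx hz hcong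

end Strong

section Two

variable {V : Type*} {D : Digraph' V} {Vs : ℕ → Set V}

lemma HasWalkIn.mono {S T : Set V} (hST : S ⊆ T) {m : ℕ} {x y : V}
    (h : D.HasWalkIn S m x y) : D.HasWalkIn T m x y := by
  obtain ⟨f, h0, hm, hS, hadj⟩ := h
  exact ⟨f, h0, hm, fun t ht => hST (hS t ht), hadj⟩

lemma mem_dichotomy (hD : D.IsLinConn 2 Vs) (v : V) : v ∈ Vs 1 ∨ v ∈ Vs 2 := by
  obtain ⟨i, hi1, hi2, hv⟩ := hD.cover v
  have : i = 1 ∨ i = 2 := by omega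
  rcases this with h | h <;> [left; right] <;> rwa [← h]

lemma not_mem_both (hD : D.IsLinConn 2 Vs) {v : V} (h1 : v ∈ Vs 1) (h2 : v ∈ Vs 2) :
    False := by
  have := hD.disjoint' 1 2 (by omega) (by omega) (by omega) (by omega) v h1 h2
  omega

lemma adj_from_two (hD : D.IsLinConn 2 Vs) {v w : V} (hv : v ∈ Vs 2) (h : D.Adj v w) :
    w ∈ Vs 2 := by
  obtain ⟨i, hi1, hcase⟩ := hD.arcs v w h
  rcases hcase with ⟨hi2, hvi, hwi⟩ | ⟨hi2, hvi, hwi⟩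
  · have : i = 1 ∨ i = 2 := by omega
    rcases this with h' | h'
    · subst h'; exact absurd (not_mem_both hD hvi hv) not_false
    · rwa [← h']
  · have : i = 1 := by omega
    subst this
    exact absurd (not_mem_both hD hvi hv) not_false

lemma walk_from_two (hD : D.IsLinConn 2 Vs) {m : ℕ} {y z : V} (hy : y ∈ Vs 2)
    (h : D.HasWalk m y z) : D.HasWalkIn (Vs 2) m y z := by
  obtain ⟨f, h0, hm, hadj⟩ := h
  have hall : ∀ t, t ≤ m → f t ∈ Vs 2 := by
    intro t
    induction t with
    | zero => intro _; rwa [h0]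
    | succ n ih =>
      intro hn
      exact adj_from_two hD (ih (by omega)) (hadj n (by omega))
  exact ⟨f, h0, hm, hall, hadj⟩

lemma walk_from_one (hD : D.IsLinConn 2 Vs) {m : ℕ} {x z : V} (hx : x ∈ Vs 1)
    (h : D.HasWalk m x z) :
    D.HasWalkIn (Vs 1) m x z ∨
    ∃ s x1 y1, s < m ∧ D.HasWalkIn (Vs 1) s x x1 ∧ D.Adj x1 y1 ∧ y1 ∈ Vs 2 ∧
      D.HasWalkIn (Vs 2) (m - (s + 1)) y1 z := by
  classical
  obtain ⟨f, h0, hm, hadj⟩ := h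
  by_cases hall : ∀ t, t ≤ m → f t ∈ Vs 1
  · left; exact ⟨f, h0, hm, hall, hadj⟩
  · right
    push_neg at hall
    have hex : ∃ t, t ≤ m ∧ f t ∉ Vs 1 := by
      obtain ⟨t, ht1, ht2⟩ := hall; exact ⟨t, ht1, ht2⟩
    set t₀ := Nat.find hex with ht₀def
    have hspec := Nat.find_spec hex
    rw [← ht₀def] at hspec
    obtain ⟨ht₀m, ht₀⟩ := hspec
    have hfV1 : ∀ t, t < t₀ → f t ∈ Vs 1 := by
      intro t ht
      by_contra hc
      exact (Nat.find_min hex ht) ⟨by omega, hc⟩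
    have ht₀pos : 0 < t₀ := by
      rcases Nat.eq_zero_or_pos t₀ with h' | h'
      · exfalso; rw [h'] at ht₀; rw [h0] at ht₀; exact ht₀ hx
      · exact h'
    have hft₀ : f t₀ ∈ Vs 2 := (mem_dichotomy hD (f t₀)).resolve_left ht₀
    have hsuf : ∀ t, t₀ ≤ t → t ≤ m → f t ∈ Vs 2 := by
      intro t
      induction t with
      | zero =>
        intro h1 _
        have h1' : t₀ = 0 := Nat.le_zero.mp h1
        rw [h1'] at hft₀
        exact hft₀
      | succ n ih =>
        intro h1 h2
        rcases Nat.lt_or_ge t₀ (n + 1) with h3 | h3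
        · exact adj_from_two hD (ih (by omega) (by omega)) (hadj n (by omega))
        · have : t₀ = n + 1 := by omega
          rwa [← this]
    refine ⟨t₀ - 1, f (t₀ - 1), f t₀, by omega, ?_, ?_, hft₀, ?_⟩
    · exact ⟨f, h0, rfl, fun t ht => hfV1 t (by omega), fun t ht => hadj t (by omega)⟩
    · have := hadj (t₀ - 1) (by omega)
      rwa [show t₀ - 1 + 1 = t₀ by omega] at this
    · refine ⟨fun t => f (t₀ + t), by simp, ?_, ?_, ?_⟩
      · show f (t₀ + (m - (t₀ - 1 + 1))) = z
        rw [show t₀ + (m - (t₀ - 1 + 1)) = m by omega, hm]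
      · intro t ht
        exact hsuf (t₀ + t) (by omega) (by omega)
      · intro t ht
        show D.Adj (f (t₀ + t)) (f (t₀ + (t + 1)))
        rw [show t₀ + (t + 1) = (t₀ + t) + 1 by omega]
        exact hadj (t₀ + t) (by omega)

lemma walk_of_cross {s r : ℕ} {x x1 y1 z : V} (h1 : D.HasWalkIn (Vs 1) s x x1)
    (ha : D.Adj x1 y1) (h2 : D.HasWalkIn (Vs 2) r y1 z) : D.HasWalk (s + 1 + r) x z := by
  have h1' : D.HasWalkIn Set.univ s x x1 := h1.mono (Set.subset_univ _)
  have ha' : D.HasWalkIn Set.univ 1 x1 y1 :=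
    hasWalkIn_one (Set.mem_univ _) (Set.mem_univ _) ha
  have h2' : D.HasWalkIn Set.univ r y1 z := h2.mono (Set.subset_univ _)
  exact ((h1'.comp ha').comp h2').hasWalk

end Two

end Digraph'

open Digraph' in
/-- description of the limit of `{C(D^m)}` for a linearly connected
digraph with two strong components, the second one nontrivial, via the bipartite
graph `B_D`. -/
theorem stmt14 {V : Type*} [Fintype V] (D : Digraph' V) (Vset : ℕ → Set V)
    (hD : D.IsLinConn 2 Vset)
    (h2 : ¬ IsTrivialComp (Vset 2))
    (κ : ℕ → ℕ) (u : ∀ i : ℕ, V → ZMod (κ i))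
    (hκ : ∀ i, 1 ≤ i → i ≤ 2 → ¬ IsTrivialComp (Vset i) →
      IsImprimIndex D (Vset i) (κ i))
    (hκtriv : IsTrivialComp (Vset 1) → κ 1 = 1)
    (hu : ∀ i, 1 ≤ i → i ≤ 2 → IsImprimLabelling D (Vset i) (u i))
    (G : SimpleGraph V) (hG : D.CompConvergesTo G) :
    let BD : ZMod (κ 1) → ZMod (κ 2) → Prop := fun a b =>
      (¬ IsTrivialComp (Vset 1) ∧ BAdj D Vset u 1 a b) ∨
      (IsTrivialComp (Vset 1) ∧ ∃ l : ZMod (κ 2), InI D Vset u 1 a l ∧ b = l - 1)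
    (∀ x ∈ Vset 1, ∀ x' ∈ Vset 1, x ≠ x' →
       (G.Adj x x' ↔ (u 1 x = u 1 x' ∨
          ∃ z : ZMod (κ 2), BD (u 1 x) z ∧ BD (u 1 x') z))) ∧
    (∀ x ∈ Vset 1, ∀ y ∈ Vset 2, (G.Adj x y ↔ BD (u 1 x) (u 2 y))) ∧
    (∀ y ∈ Vset 2, ∀ y' ∈ Vset 2, y ≠ y' → (G.Adj y y' ↔ u 2 y = u 2 y')) := by
  intro BD
  have hBD : ∀ a b, BD a b ↔
      ((¬ IsTrivialComp (Vset 1) ∧ BAdj D Vset u 1 a b) ∨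
       (IsTrivialComp (Vset 1) ∧ ∃ l : ZMod (κ 2), InI D Vset u 1 a l ∧ b = l - 1)) :=
    fun a b => Iff.rfl
  classical
  obtain ⟨N, hN1, hN⟩ := hG
  have hGadj : ∀ (m : ℕ), N ≤ m → ∀ v w : V,
      (G.Adj v w ↔ (v ≠ w ∧ ∃ z, D.HasWalk m v z ∧ D.HasWalk m w z)) := by
    intro m hm v w
    rw [← hN m hm]
    unfold compGraph
    exact Iff.rfl
  have hu1 : D.IsImprimLabelling (Vset 1) (u 1) := hu 1 (by omega) (by omega)
  have hu2 : D.IsImprimLabelling (Vset 2) (u 2) := hu 2 (by omega) (by omega)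
  have hκ2 : D.IsImprimIndex (Vset 2) (κ 2) := hκ 2 (by omega) (by omega) h2
  have hstrong1 := hD.strong 1 (by omega) (by omega)
  have hstrong2 := hD.strong 2 (by omega) (by omega)
  obtain ⟨y₀, hy₀⟩ := hD.nonempty 2 (by omega) (by omega)
  obtain ⟨c₂, hc₂pos, hc₂⟩ := exists_closed_walk hstrong2 h2 hy₀
  have hκ2pos : 0 < κ 2 := by
    have hdd := hκ2.1 y₀ c₂ hy₀ hc₂pos hc₂
    rcases Nat.eq_zero_or_pos (κ 2) with h | h
    · exfalso; rw [h] at hdd; omega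
    · exact h
  haveI : NeZero (κ 2) := ⟨by omega⟩
  obtain ⟨M2, hM2⟩ := reachBig hstrong2 h2 hκ2 hu2
  have hsurj2 : ∀ c : ZMod (κ 2), ∃ w ∈ Vset 2, u 2 w = c := by
    intro c
    obtain ⟨w, hw, hwalk⟩ := forwardWalk hstrong2 h2 hy₀ ((c - u 2 y₀).val)
    refine ⟨w, hw, ?_⟩
    rw [hu2.along _ _ _ hwalk, ZMod.natCast_val, ZMod.cast_id]
    ring
  have preyA : ∀ (m : ℕ) (y z : V), y ∈ Vset 2 → D.HasWalk m y z →
      z ∈ Vset 2 ∧ u 2 z = u 2 y + (m : ZMod (κ 2)) := by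
    intro m y z hy h
    have h' := walk_from_two hD hy h
    exact ⟨h'.end_mem, hu2.along m y z h'⟩
  have preyA' : ∀ m, M2 ≤ m → ∀ y ∈ Vset 2, ∀ z ∈ Vset 2,
      u 2 z = u 2 y + (m : ZMod (κ 2)) → D.HasWalk m y z := by
    intro m hm y hy z hz heq
    exact (hM2 m hm y hy z hz (by rw [heq]; ring)).hasWalk
  have part3 : ∀ y ∈ Vset 2, ∀ y' ∈ Vset 2, y ≠ y' → (G.Adj y y' ↔ u 2 y = u 2 y') := by
    intro y hy y' hy' hne
    rw [hGadj (N + M2) (by omega) y y']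
    constructor
    · rintro ⟨_, w, hw1, hw2⟩
      have h1 := preyA (N + M2) y w hy hw1
      have h2 := preyA (N + M2) y' w hy' hw2
      exact add_right_cancel (h1.2.symm.trans h2.2)
    · intro heq
      obtain ⟨w, hw, hwalk⟩ := forwardWalk hstrong2 h2 hy (N + M2)
      refine ⟨hne, w, hwalk.hasWalk, ?_⟩
      apply preyA' (N + M2) (by omega) y' hy' w hwalk.end_mem
      rw [hu2.along (N + M2) y w hwalk, heq]
  by_cases htriv : IsTrivialComp (Vset 1)
  · -- trivial first component
    obtain ⟨v, hv⟩ := htriv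
    have htriv' : IsTrivialComp (Vset 1) := ⟨v, hv⟩
    have preyBt : ∀ (m : ℕ) (x z : V), x ∈ Vset 1 → z ∈ Vset 2 → D.HasWalk m x z →
        ∃ l, InI D Vset u 1 (u 1 x) l ∧ u 2 z - (m : ZMod (κ 2)) = l - 1 := by
      intro m x z hx hz h
      rcases walk_from_one hD hx h with h' | ⟨s, x1, y1, hsm, hw1, harc, hy1, hw2⟩
      · exact absurd (not_mem_both hD h'.end_mem hz) not_false
      · have hs0 : s = 0 := by
          by_contra hs0
          obtain ⟨f, hf0, hfs, hfS, hfadj⟩ := hw1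
          have h1 : f 0 = v := by
            have := hfS 0 (by omega); rw [hv] at this; exact this
          have h2 : f 1 = v := by
            have := hfS 1 (by omega); rw [hv] at this; exact this
          have := hfadj 0 (by omega)
          rw [h1, h2] at this
          exact D.irrefl v this
        subst hs0
        obtain ⟨hxx1, _⟩ := hasWalkIn_zero_iff.mp hw1
        refine ⟨u 2 y1, ⟨x1, hxx1 ▸ hx, y1, hy1, harc, by rw [← hxx1], rfl⟩, ?_⟩
        have := hu2.along (m - (0 + 1)) y1 z hw2
        rw [this, Nat.cast_sub (by omega : 0 + 1 ≤ m)]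
        push_cast
        ring
    have preyBt' : ∀ m, M2 + 1 ≤ m → ∀ x z, x ∈ Vset 1 → z ∈ Vset 2 →
        (∃ l, InI D Vset u 1 (u 1 x) l ∧ u 2 z - (m : ZMod (κ 2)) = l - 1) →
        D.HasWalk m x z := by
      rintro m hm x z hx hz ⟨l, ⟨x0, hx0, y0, hy0, harc, hk, hl⟩, hzl⟩
      have hxv : x = v := by rw [hv] at hx; exact hx
      have hx0v : x0 = v := by rw [hv] at hx0; exact hx0
      have hw2 : D.HasWalkIn (Vset 2) (m - 1) y0 z := by
        apply hM2 (m - 1) (by omega) y0 hy0 z hz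
        rw [Nat.cast_sub (by omega : 1 ≤ m), hl]
        have hz2 : u 2 z = l - 1 + (m : ZMod (κ 2)) := by rw [← hzl]; ring
        rw [hz2]
        ring
      have hxx0 : x = x0 := by rw [hxv, hx0v]
      have hw1 : D.HasWalkIn (Vset 1) 0 x x0 := hasWalkIn_zero_iff.mpr ⟨hxx0, hx⟩
      have := walk_of_cross hw1 harc hw2
      rwa [show 0 + 1 + (m - 1) = m by omega] at this
    refine ⟨?_, ?_, part3⟩
    · intro x hx x' hx' hne
      exfalso
      rw [hv] at hx hx'
      exact hne ((Set.eq_of_mem_singleton hx).trans (Set.eq_of_mem_singleton hx').symm)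
    · intro x hx y hy
      have hnexy : x ≠ y := fun h => not_mem_both hD hx (h ▸ hy)
      rw [hGadj (N + M2 + 1) (by omega) x y, hBD]
      constructor
      · rintro ⟨_, w, hw1, hw2⟩
        obtain ⟨hwV2, hwu⟩ := preyA (N + M2 + 1) y w hy hw2
        obtain ⟨l, hI, hle⟩ := preyBt (N + M2 + 1) x w hx hwV2 hw1
        right
        refine ⟨htriv', l, hI, ?_⟩
        rw [← hle, hwu]; ring
      · rintro (⟨hnt, _⟩ | ⟨_, l, hI, hlb⟩)
        · exact absurd htriv' hnt
        obtain ⟨w, hw, hwalk⟩ := forwardWalk hstrong2 h2 hy (N + M2 + 1)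
        have hwu : u 2 w = u 2 y + (N + M2 + 1 : ℕ) := hu2.along _ y w hwalk
        refine ⟨hnexy, w, preyBt' (N + M2 + 1) (by omega) x w hx hw ⟨l, hI, ?_⟩,
          hwalk.hasWalk⟩
        rw [hwu, hlb]; ring
  · -- nontrivial first component
    have hκ1 : D.IsImprimIndex (Vset 1) (κ 1) := hκ 1 (by omega) (by omega) htriv
    obtain ⟨x₀, hx₀⟩ := hD.nonempty 1 (by omega) (by omega)
    obtain ⟨c₁, hc₁pos, hc₁⟩ := exists_closed_walk hstrong1 htriv hx₀
    have hκ1pos : 0 < κ 1 := by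
      have hdd := hκ1.1 x₀ c₁ hx₀ hc₁pos hc₁
      rcases Nat.eq_zero_or_pos (κ 1) with h | h
      · exfalso; rw [h] at hdd; omega
      · exact h
    obtain ⟨M1, hM1⟩ := reachBig hstrong1 htriv hκ1 hu1
    have preyB : ∀ (m : ℕ) (x z : V), x ∈ Vset 1 → z ∈ Vset 2 → D.HasWalk m x z →
        BAdj D Vset u 1 (u 1 x) (u 2 z - (m : ZMod (κ 2))) := by
      intro m x z hx hz h
      rcases walk_from_one hD hx h with h' | ⟨s, x1, y1, hsm, hw1, harc, hy1, hw2⟩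
      · exact absurd (not_mem_both hD h'.end_mem hz) not_false
      · refine ⟨u 1 x1, u 2 y1, -(s + 1 : ℤ),
          ⟨x1, hw1.end_mem, y1, hy1, harc, rfl, rfl⟩, ?_, ?_⟩
        · rw [hu1.along s x x1 hw1]
          push_cast
          ring
        · rw [hu2.along (m - (s + 1)) y1 z hw2, Nat.cast_sub (by omega : s + 1 ≤ m)]
          push_cast
          ring
    set L := κ 1 * κ 2 with hL
    have hLpos : 0 < L := Nat.mul_pos hκ1pos hκ2pos
    have hL1 : ((L : ℕ) : ZMod (κ 1)) = 0 := by
      rw [hL]; push_cast; rw [ZMod.natCast_self]; ring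
    have hL2 : ((L : ℕ) : ZMod (κ 2)) = 0 := by
      rw [hL]; push_cast; rw [ZMod.natCast_self]; ring
    set Mb := L * (M1 + 2) + M2 with hMb
    have preyB' : ∀ (m : ℕ), Mb ≤ m → ∀ x z, x ∈ Vset 1 → z ∈ Vset 2 →
        BAdj D Vset u 1 (u 1 x) (u 2 z - (m : ZMod (κ 2))) → D.HasWalk m x z := by
      rintro m hm x z hx hz ⟨k, l, a, ⟨x0, hx0, y0, hy0, harc, hk, hl⟩, hxk, hzl⟩
      set s₀ := ((-(1 + a)) % (L : ℤ)).toNat with hs₀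
      have hLZ : (0 : ℤ) < (L : ℤ) := by exact_mod_cast hLpos
      have h0le : 0 ≤ (-(1 + a)) % (L : ℤ) := Int.emod_nonneg _ (by omega)
      have hs₀lt : s₀ < L := by
        have := Int.emod_lt_of_pos (-(1 + a)) hLZ
        omega
      set s := s₀ + L * (M1 + 1) with hs
      have hsM1 : M1 ≤ s := by
        have h := Nat.le_mul_of_pos_left (M1 + 1) hLpos
        omega
      have hsm : s + 1 + M2 ≤ m := by
        have h1 : s + 1 + M2 ≤ Mb := by
          rw [hMb]
          have : s + 1 ≤ L + L * (M1 + 1) := by omega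
          have h2 : L + L * (M1 + 1) = L * (M1 + 2) := by ring
          omega
        omega
      have h3 : (s : ℤ) = (s₀ : ℤ) + (L : ℤ) * ((M1 : ℤ) + 1) := by
        rw [hs]; push_cast; ring
      have hdiff : (s : ℤ) + (1 + a) =
          (L : ℤ) * (((M1 : ℤ) + 1) - ((-(1 + a)) / (L : ℤ))) := by
        have h1 : ((s₀ : ℕ) : ℤ) = (-(1 + a)) % (L : ℤ) := Int.toNat_of_nonneg h0le
        have h2 : (-(1 + a)) % (L : ℤ) =
            -(1 + a) - (L : ℤ) * ((-(1 + a)) / (L : ℤ)) := Int.emod_def _ _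
        rw [h3, h1, h2]; ring
      have hs1 : ((s : ℕ) : ZMod (κ 1)) = -(1 + (a : ZMod (κ 1))) := by
        have hc := congrArg (fun t : ℤ => ((t : ZMod (κ 1)))) hdiff
        push_cast at hc
        rw [hL1] at hc
        linear_combination hc
      have hs2 : ((s : ℕ) : ZMod (κ 2)) = -(1 + (a : ZMod (κ 2))) := by
        have hc := congrArg (fun t : ℤ => ((t : ZMod (κ 2)))) hdiff
        push_cast at hc
        rw [hL2] at hc
        linear_combination hc
      set r := m - (s + 1) with hr
      have hrM2 : M2 ≤ r := by omega
      have hw1 : D.HasWalkIn (Vset 1) s x x0 := by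
        apply hM1 s (by omega) x hx x0 hx0
        rw [hs1, hk, hxk]
        ring
      have hw2 : D.HasWalkIn (Vset 2) r y0 z := by
        apply hM2 r hrM2 y0 hy0 z hz
        have hrcast : ((r : ℕ) : ZMod (κ 2)) =
            (m : ZMod (κ 2)) - ((s : ℕ) : ZMod (κ 2)) - 1 := by
          rw [hr, Nat.cast_sub (by omega : s + 1 ≤ m)]
          push_cast
          ring
        have hz2 : u 2 z = l + (a : ZMod (κ 2)) + (m : ZMod (κ 2)) := by
          rw [← hzl]; ring
        rw [hrcast, hs2, hl, hz2]
        ring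
      have := walk_of_cross hw1 harc hw2
      rwa [show s + 1 + r = m by omega] at this
    have preyC : ∀ (m : ℕ) (x z : V), x ∈ Vset 1 → z ∈ Vset 1 → D.HasWalk m x z →
        u 1 z = u 1 x + (m : ZMod (κ 1)) := by
      intro m x z hx hz h
      rcases walk_from_one hD hx h with h' | ⟨s, x1, y1, hsm, hw1, harc, hy1, hw2⟩
      · exact hu1.along m x z h'
      · exact absurd (not_mem_both hD hz hw2.end_mem) not_false
    have preyC' : ∀ m, M1 ≤ m → ∀ x z, x ∈ Vset 1 → z ∈ Vset 1 →
        u 1 z = u 1 x + (m : ZMod (κ 1)) → D.HasWalk m x z := by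
      intro m hm x z hx hz heq
      exact (hM1 m hm x hx z hz (by rw [heq]; ring)).hasWalk
    set mm := N + M1 + M2 + Mb with hmm
    refine ⟨?_, ?_, part3⟩
    · intro x hx x' hx' hne
      rw [hGadj mm (by omega) x x']
      constructor
      · rintro ⟨_, w, hw1, hw2⟩
        rcases mem_dichotomy hD w with hw | hw
        · left
          have h1 := preyC mm x w hx hw hw1
          have h2 := preyC mm x' w hx' hw hw2
          exact add_right_cancel (h1.symm.trans h2)
        · right
          refine ⟨u 2 w - (mm : ZMod (κ 2)), ?_, ?_⟩
          · rw [hBD]; exact Or.inl ⟨htriv, preyB mm x w hx hw hw1⟩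
          · rw [hBD]; exact Or.inl ⟨htriv, preyB mm x' w hx' hw hw2⟩
      · rintro (heq | ⟨zz, hz1, hz2⟩)
        · obtain ⟨w, hw, hwalk⟩ := forwardWalk hstrong1 htriv hx mm
          refine ⟨hne, w, hwalk.hasWalk, preyC' mm (by omega) x' w hx' hw ?_⟩
          rw [hu1.along mm x w hwalk, heq]
        · rw [hBD] at hz1 hz2
          rcases hz1 with ⟨_, hB1⟩ | ⟨ht, _⟩
          swap
          · exact absurd ht htriv
          rcases hz2 with ⟨_, hB2⟩ | ⟨ht, _⟩
          swap
          · exact absurd ht htriv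
          obtain ⟨w, hw, hwu⟩ := hsurj2 (zz + (mm : ZMod (κ 2)))
          have hwm : u 2 w - (mm : ZMod (κ 2)) = zz := by rw [hwu]; ring
          exact ⟨hne, w, preyB' mm (by omega) x w hx hw (by rw [hwm]; exact hB1),
            preyB' mm (by omega) x' w hx' hw (by rw [hwm]; exact hB2)⟩
    · intro x hx y hy
      have hnexy : x ≠ y := fun h => not_mem_both hD hx (h ▸ hy)
      rw [hGadj mm (by omega) x y, hBD]
      constructor
      · rintro ⟨_, w, hw1, hw2⟩
        obtain ⟨hwV2, hwu⟩ := preyA mm y w hy hw2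
        have hB := preyB mm x w hx hwV2 hw1
        left
        refine ⟨htriv, ?_⟩
        have hww : u 2 w - (mm : ZMod (κ 2)) = u 2 y := by rw [hwu]; ring
        rwa [hww] at hB
      · rintro (⟨_, hB⟩ | ⟨ht, _⟩)
        swap
        · exact absurd ht htriv
        obtain ⟨w, hw, hwalk⟩ := forwardWalk hstrong2 h2 hy mm
        have hwu : u 2 w = u 2 y + (mm : ZMod (κ 2)) := hu2.along mm y w hwalk
        refine ⟨hnexy, w, preyB' mm (by omega) x w hx hw ?_, hwalk.hasWalk⟩
        have hww : u 2 w - (mm : ZMod (κ 2)) = u 2 y := by rw [hwu]; ring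
        rw [hww]
        exact hB
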